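/- Let E = E_c - E_e with E_c, E_e : ℝ^n → ℝ convex and differentiable, let A be a symmetric positive semidefinite n×n matrix, and suppose u, v ∈ ℝ^n satisfy (v - u)/τ = -A(∇E_c(v) - ∇E_e(u)) for some τ > 0. Then E(v) ≤ E(u). -/

import Mathlib

open RealInnerProductSpace

lemma grad_first_order {n : ℕ} {f : EuclideanSpace ℝ (Fin n) → ℝ}
    {g x : EuclideanSpace ℝ (Fin n)} (hf : ConvexOn ℝ Set.univ f)
    (hg : HasGradientAt f g x) (y : EuclideanSpace ℝ (Fin n)) :
    ⟪g, y - x⟫ ≤ f y - f x := by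
  set c : ℝ → EuclideanSpace ℝ (Fin n) := fun t => x + t • (y - x) with hc
  have hcderiv : ∀ t : ℝ, HasDerivAt c (y - x) t := by
    intro t
    rw [hc]; simpa only [id, one_smul] using ((hasDerivAt_id t).smul_const (y - x)).const_add x
  have hd : HasDerivAt (fun t => f (c t)) ⟪g, y - x⟫ 0 := by
    have h0 : c 0 = x := by simp [hc]
    have := (h0 ▸ hg.hasFDerivAt).comp_hasDerivAt 0 (hcderiv 0)
    exact this
  have htend := hasDerivAt_iff_tendsto_slope.mp hd
  have htend' : Filter.Tendsto (slope (fun t => f (c t)) 0) (nhdsWithin 0 (Set.Ioi 0))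
      (nhds ⟪g, y - x⟫) :=
    htend.mono_left (nhdsWithin_mono 0 (fun t ht => ne_of_gt ht))
  refine le_of_tendsto htend' ?_
  filter_upwards [Ioc_mem_nhdsGT_of_mem (by norm_num : (0:ℝ) ∈ Set.Ico 0 1)] with t ht
  obtain ⟨ht0, ht1⟩ := ht
  have hconv := hf.2 (Set.mem_univ x) (Set.mem_univ y) (by linarith : (0:ℝ) ≤ 1 - t) ht0.le
    (by ring)
  rw [smul_eq_mul, smul_eq_mul] at hconv
  have hce : c t = (1 - t) • x + t • y := by
    simp [hc]; module
  rw [slope_def_field]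
  simp only [hce]
  rw [sub_zero, div_le_iff₀ ht0]
  calc f ((1 - t) • x + t • y) - f (c 0) ≤ (1 - t) * f x + t * f y - f (c 0) := by linarith
    _ = (f y - f x) * t := by simp [hc]; ring

theorem convex_splitting_conserved_energy_stable (n : ℕ)
    (Ec Ee : EuclideanSpace ℝ (Fin n) → ℝ)
    (Gc Ge : EuclideanSpace ℝ (Fin n) → EuclideanSpace ℝ (Fin n))
    (hEc : ConvexOn ℝ Set.univ Ec) (hEe : ConvexOn ℝ Set.univ Ee)
    (hGc : ∀ x, HasGradientAt Ec (Gc x) x)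
    (hGe : ∀ x, HasGradientAt Ee (Ge x) x)
    (A : EuclideanSpace ℝ (Fin n) →ₗ[ℝ] EuclideanSpace ℝ (Fin n))
    (hAsymm : ∀ x y, ⟪A x, y⟫ = ⟪x, A y⟫)
    (hApsd : ∀ x, 0 ≤ ⟪A x, x⟫)
    (u v : EuclideanSpace ℝ (Fin n)) (τ : ℝ) (hτ : 0 < τ)
    (hscheme : τ⁻¹ • (v - u) = -(A (Gc v - Ge u))) :
    Ec v - Ee v ≤ Ec u - Ee u := by
  set w := Gc v - Ge u with hw
  have h1 : ⟪Gc v, u - v⟫ ≤ Ec u - Ec v := grad_first_order hEc (hGc v) u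
  have h2 : ⟪Ge u, v - u⟫ ≤ Ee v - Ee u := grad_first_order hEe (hGe u) v
  have huv : u - v = τ • A w := by
    have := congrArg (fun z => τ • z) hscheme
    simp only [smul_smul, mul_inv_cancel₀ hτ.ne', one_smul] at this
    have : v - u = -(τ • A w) := by simpa [smul_neg] using this
    rw [eq_comm, neg_eq_iff_eq_neg, eq_comm, neg_sub] at this
    exact this
  have hsum : ⟪w, u - v⟫ ≤ (Ec u - Ec v) + (Ee v - Ee u) := by
    have : ⟪w, u - v⟫ = ⟪Gc v, u - v⟫ + ⟪Ge u, v - u⟫ := by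
      rw [hw]
      simp only [inner_sub_left, inner_sub_right (𝕜 := ℝ)]
      ring
    linarith
  have hpos : 0 ≤ ⟪w, u - v⟫ := by
    rw [huv, inner_smul_right, ← hAsymm]
    exact mul_nonneg hτ.le (hApsd w)
  linarith
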